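/- Let I_1, …, I_l ⊆ {1,…,m} be index sets and let x ∈ Row(A). If the composed projections preserve the norm of x, i.e. ‖P_{I_l}(⋯(P_{I_1} x)⋯)‖ = ‖x‖, then x is orthogonal to v_h for every h ∈ I_1 ∪ ⋯ ∪ I_l; consequently each partial composition fixes x, i.e. P_{I_s}(⋯(P_{I_1} x)⋯) = x for every 1 ≤ s ≤ l. -/

import Mathlib

open scoped RealInnerProductSpace

/-- The orthogonal projection of `E` onto the orthogonal complement of
`span {v h : h ∈ I}`, i.e. the projection `I - A_I† A_I` onto the null space of the
row block `A_I` of the matrix `A` whose rows are the vectors `v h`. -/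
noncomputable def projPerp {E : Type*} [NormedAddCommGroup E] [InnerProductSpace ℝ E]
    [FiniteDimensional ℝ E] {m : ℕ} (v : Fin m → E) (I : Set (Fin m)) (x : E) : E :=
  (Submodule.orthogonalProjectionOnto (Submodule.span ℝ (v '' I))ᗮ x : E)

lemma projPerp_norm_le {E : Type*} [NormedAddCommGroup E] [InnerProductSpace ℝ E]
    [FiniteDimensional ℝ E] {m : ℕ} (v : Fin m → E) (I : Set (Fin m)) (x : E) :
    ‖projPerp v I x‖ ≤ ‖x‖ := by
  have h := Submodule.norm_sq_eq_add_norm_sq_projection x (Submodule.span ℝ (v '' I))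
  simp only [← Submodule.norm_coe] at h
  have h2 : ‖projPerp v I x‖ ^ 2 ≤ ‖x‖ ^ 2 := by
    unfold projPerp
    nlinarith [norm_nonneg ((Submodule.orthogonalProjectionOnto (Submodule.span ℝ (v '' I)) x : E))]
  nlinarith [norm_nonneg (projPerp v I x), norm_nonneg x]

lemma projPerp_eq_of_norm_eq {E : Type*} [NormedAddCommGroup E] [InnerProductSpace ℝ E]
    [FiniteDimensional ℝ E] {m : ℕ} (v : Fin m → E) (I : Set (Fin m)) (x : E)
    (h : ‖projPerp v I x‖ = ‖x‖) : projPerp v I x = x := by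
  have hpy := Submodule.norm_sq_eq_add_norm_sq_projection x (Submodule.span ℝ (v '' I))
  simp only [← Submodule.norm_coe] at hpy
  have h0 : ‖(Submodule.orthogonalProjectionOnto (Submodule.span ℝ (v '' I)) x : E)‖ = 0 := by
    have : ‖projPerp v I x‖ ^ 2 = ‖x‖ ^ 2 := by rw [h]
    unfold projPerp at this
    nlinarith [norm_nonneg ((Submodule.orthogonalProjectionOnto (Submodule.span ℝ (v '' I)) x : E))]
  have hx : x ∈ (Submodule.span ℝ (v '' I))ᗮ := by
    have hmem := Submodule.sub_starProjection_mem_orthogonal (K := Submodule.span ℝ (v '' I)) x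
    have : (Submodule.starProjection (Submodule.span ℝ (v '' I)) x : E) = 0 := by
      simpa using norm_eq_zero.mp h0
    simpa [this] using hmem
  exact Submodule.starProjection_eq_self_iff.mpr hx

/-- General fold lemma. -/
lemma fold_norm_le {E : Type*} [NormedAddCommGroup E] (L : List (E → E))
    (hL : ∀ f ∈ L, ∀ y, ‖f y‖ ≤ ‖y‖) (x : E) :
    ‖L.foldl (fun y f => f y) x‖ ≤ ‖x‖ := by
  induction L generalizing x with
  | nil => simp
  | cons f L ih =>
    simp only [List.foldl_cons]
    exact le_trans (ih (fun g hg => hL g (List.mem_cons_of_mem _ hg)) (f x))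
      (hL f List.mem_cons_self x)

lemma fold_fix {E : Type*} [NormedAddCommGroup E] (L : List (E → E))
    (hL : ∀ f ∈ L, ∀ y, ‖f y‖ ≤ ‖y‖)
    (hfix : ∀ f ∈ L, ∀ y, ‖f y‖ = ‖y‖ → f y = y) (x : E)
    (h : ‖L.foldl (fun y f => f y) x‖ = ‖x‖) :
    (∀ f ∈ L, f x = x) ∧ ∀ s : ℕ, (L.take s).foldl (fun y f => f y) x = x := by
  induction L generalizing x with
  | nil => exact ⟨by simp, by simp⟩
  | cons f L ih =>
    have hfx : ‖f x‖ = ‖x‖ := by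
      have h1 : ‖L.foldl (fun y f => f y) (f x)‖ ≤ ‖f x‖ :=
        fold_norm_le L (fun g hg => hL g (List.mem_cons_of_mem _ hg)) (f x)
      have h2 : ‖f x‖ ≤ ‖x‖ := hL f List.mem_cons_self x
      simp only [List.foldl_cons] at h
      linarith [le_of_eq h.symm]
    have hfxx : f x = x := hfix f List.mem_cons_self x hfx
    simp only [List.foldl_cons, hfxx] at h
    obtain ⟨hA, hB⟩ := ih (fun g hg => hL g (List.mem_cons_of_mem _ hg))
      (fun g hg => hfix g (List.mem_cons_of_mem _ hg)) x h
    refine ⟨fun g hg => ?_, fun s => ?_⟩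
    · rcases List.mem_cons.mp hg with rfl | hg
      · exact hfxx
      · exact hA g hg
    · cases s with
      | zero => simp
      | succ n => simpa [List.foldl_cons, hfxx] using hB n

theorem eq_of_norm_comp_projPerp_eq
    {E : Type*} [NormedAddCommGroup E] [InnerProductSpace ℝ E] [FiniteDimensional ℝ E]
    {m l : ℕ} (v : Fin m → E) (Is : Fin l → Set (Fin m))
    (x : E) (hx : x ∈ Submodule.span ℝ (Set.range v))
    (hnorm : ‖(List.ofFn fun t => projPerp v (Is t)).foldl (fun y f => f y) x‖ = ‖x‖) :
    (∀ t : Fin l, ∀ h ∈ Is t, ⟪x, v h⟫ = 0) ∧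
      (∀ s : ℕ, s ≤ l →
        ((List.ofFn fun t => projPerp v (Is t)).take s).foldl (fun y f => f y) x = x) := by
  have hmem : ∀ f ∈ (List.ofFn fun t => projPerp v (Is t)), ∃ t, f = projPerp v (Is t) := by
    intro f hf
    obtain ⟨t, ht⟩ := List.mem_ofFn.mp hf
    exact ⟨t, ht.symm⟩
  have hL : ∀ f ∈ (List.ofFn fun t => projPerp v (Is t)), ∀ y, ‖f y‖ ≤ ‖y‖ := by
    intro f hf y; obtain ⟨t, rfl⟩ := hmem f hf; exact projPerp_norm_le v (Is t) y
  have hfix : ∀ f ∈ (List.ofFn fun t => projPerp v (Is t)), ∀ y, ‖f y‖ = ‖y‖ → f y = y := by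
    intro f hf y hy; obtain ⟨t, rfl⟩ := hmem f hf; exact projPerp_eq_of_norm_eq v (Is t) y hy
  obtain ⟨hA, hB⟩ := fold_fix _ hL hfix x hnorm
  constructor
  · intro t h hh
    have hfx : projPerp v (Is t) x = x := hA _ (by
      refine List.mem_ofFn.mpr ⟨t, rfl⟩)
    have hxperp : x ∈ (Submodule.span ℝ (v '' Is t))ᗮ :=
      Submodule.starProjection_eq_self_iff.mp hfx
    have hv : v h ∈ Submodule.span ℝ (v '' Is t) :=
      Submodule.subset_span ⟨h, hh, rfl⟩
    have := hxperp (v h) hv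
    rwa [real_inner_comm] at this
  · intro s _; exact hB s
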